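/- arXiv:2311.11042 — 2 statements merged into one kernel-verified Lean document; each statement's English description precedes it below -/
import Mathlib

section
/- Let σ ⊂ ℝ^m be a lattice simplex of dimension d with vertices x_0, ..., x_d, viewed as points of ℝ^{m+1} with last coordinate 1. Then every lattice point y in the interior of the cone C(σ) can be written as y = z + w where z is an interior lattice point of C(σ) of degree (last coordinate) at most d+1 and w is a nonnegative integer combination of the lattice points of σ × {1}. In particular, rdeg y ≤ d+1 for all y ∈ M*(σ). -/
open Set

noncomputable section

/-- Lift a point of `ℝ^m` to height 1 in `ℝ^(m+1)`. -/
def lift {m : ℕ} (x : Fin m → ℝ) : Fin (m + 1) → ℝ := Fin.snoc x 1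

/-- A point with integer coordinates (a lattice point). -/
def isLat {n : ℕ} (x : Fin n → ℝ) : Prop := ∀ i, ∃ z : ℤ, x i = (z : ℝ)

/-- The cone `C(P)` generated by `P × {1}` (for convex `P`). -/
def coneOf {m : ℕ} (P : Set (Fin m → ℝ)) : Set (Fin (m + 1) → ℝ) :=
  {y | ∃ (c : ℝ) (p : Fin m → ℝ), 0 ≤ c ∧ p ∈ P ∧ y = c • lift p}

/-- The semigroup `M(P)` generated by the lattice points of `P × {1}`. -/
def Msemi {m : ℕ} (P : Set (Fin m → ℝ)) : AddSubmonoid (Fin (m + 1) → ℝ) :=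
  AddSubmonoid.closure {y | ∃ p ∈ P, isLat p ∧ y = lift p}

/-- `M*(P)`: the lattice points in the relative interior of `C(P)`. -/
def Mstar {m : ℕ} (P : Set (Fin m → ℝ)) : Set (Fin (m + 1) → ℝ) :=
  {y | y ∈ intrinsicInterior ℝ (coneOf P) ∧ isLat y}

/-- The degree: the last coordinate. -/
def deg {m : ℕ} (y : Fin (m + 1) → ℝ) : ℝ := y (Fin.last m)

/-- The reduced `P`-degree of `y`. -/
def rdeg {m : ℕ} (P : Set (Fin m → ℝ)) (y : Fin (m + 1) → ℝ) : ℝ :=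
  sInf {r | ∃ z w, z ∈ Mstar P ∧ w ∈ Msemi P ∧ y = z + w ∧ r = deg z}

/-- An empty lattice simplex: its only lattice points are its vertices. -/
def IsEmptyLatticeSimplex {m : ℕ} (s : Set (Fin m → ℝ)) : Prop :=
  ∃ (k : ℕ) (x : Fin (k + 1) → (Fin m → ℝ)), AffineIndependent ℝ x ∧
    (∀ i, isLat (x i)) ∧ s = convexHull ℝ (Set.range x) ∧
    (∀ p ∈ s, isLat p → p ∈ Set.range x)

/-- A lattice triangulation of `P`: a finite face-closed family of empty lattice
simplices covering `P`, with pairwise disjoint relative interiors (every point of `P`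
lies in the relative interior of exactly one simplex), and using every lattice point
of `P` as a vertex. -/
structure IsLatticeTriangulation {m : ℕ} (P : Set (Fin m → ℝ))
    (T : Set (Set (Fin m → ℝ))) : Prop where
  finite : T.Finite
  simplex : ∀ s ∈ T, IsEmptyLatticeSimplex s
  subset : ∀ s ∈ T, s ⊆ P
  partition : ∀ p ∈ P, ∃! s, s ∈ T ∧ p ∈ intrinsicInterior ℝ s
  vertex : ∀ p ∈ P, isLat p → {p} ∈ T

section Aux

variable {m d : ℕ} (x : Fin (d + 1) → (Fin m → ℝ))

lemma lift_apply_last (p : Fin m → ℝ) : lift p (Fin.last m) = 1 := by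
  simp [lift]

lemma lift_apply_castSucc (p : Fin m → ℝ) (j : Fin m) : lift p (Fin.castSucc j) = p j := by
  simp [lift]

lemma isLat_lift {p : Fin m → ℝ} (hp : isLat p) : isLat (lift p) := by
  intro j
  refine Fin.lastCases ?_ ?_ j
  · exact ⟨1, by simp [lift_apply_last]⟩
  · intro j; obtain ⟨z, hz⟩ := hp j; exact ⟨z, by rwa [lift_apply_castSucc]⟩

lemma lift_sum {t : Fin (d + 1) → ℝ} (ht : ∑ i, t i = 1) :
    lift (∑ i, t i • x i) = ∑ i, t i • lift (x i) := by
  funext j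
  refine Fin.lastCases ?_ ?_ j
  · simp [lift_apply_last, Finset.sum_apply, ht]
  · intro j; simp [lift_apply_castSucc, Finset.sum_apply]

lemma linIndep (hx : AffineIndependent ℝ x) :
    LinearIndependent ℝ (fun i => lift (x i)) := by
  rw [Fintype.linearIndependent_iff]
  intro g hg
  have hlast : ∑ i, g i = 0 := by
    have := congrFun hg (Fin.last m)
    simpa [Finset.sum_apply, lift_apply_last] using this
  have hrest : ∑ i, g i • x i = 0 := by
    funext j
    have := congrFun hg (Fin.castSucc j)
    simpa [Finset.sum_apply, lift_apply_castSucc] using this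
  intro i
  exact affineIndependent_iff.1 hx Finset.univ g hlast hrest i (Finset.mem_univ i)

lemma mem_coneOf_iff (y : Fin (m + 1) → ℝ) :
    y ∈ coneOf (convexHull ℝ (Set.range x)) ↔
      ∃ c : Fin (d + 1) → ℝ, (∀ i, 0 ≤ c i) ∧ y = ∑ i, c i • lift (x i) := by
  classical
  constructor
  · rintro ⟨a, p, ha, hp, rfl⟩
    rw [convexHull_range_eq_exists_affineCombination] at hp
    obtain ⟨s, w, hw0, hw1, rfl⟩ := hp
    set t : Fin (d + 1) → ℝ := fun i => if i ∈ s then w i else 0 with htdef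
    have ht1 : ∑ i, t i = 1 := by
      rw [← hw1]; rw [Finset.sum_ite_mem]; simp
    have ht0 : ∀ i, 0 ≤ t i := by
      intro i; by_cases hi : i ∈ s <;> simp [htdef, hi, hw0 i]
    have htx : ∑ i, t i • x i = s.affineCombination ℝ x w := by
      rw [Finset.affineCombination_eq_linear_combination s x w hw1]
      rw [← Finset.sum_subset (Finset.subset_univ s) (fun i _ hi => by simp [htdef, hi])]
      exact Finset.sum_congr rfl fun i hi => by simp [htdef, hi]
    refine ⟨fun i => a * t i, fun i => mul_nonneg ha (ht0 i), ?_⟩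
    rw [show s.affineCombination ℝ x w = ∑ i, t i • x i from htx.symm]
    rw [lift_sum x ht1, Finset.smul_sum]
    exact Finset.sum_congr rfl fun i _ => by rw [smul_smul]
  · rintro ⟨c, hc, rfl⟩
    by_cases hzero : ∀ i, c i = 0
    · exact ⟨0, x 0, le_refl 0, subset_convexHull ℝ _ ⟨0, rfl⟩, by
        simp [hzero]⟩
    · set a : ℝ := ∑ i, c i with hadef
      have ha : 0 < a := by
        rcases not_forall.1 hzero with ⟨i, hi⟩
        have : 0 < c i := lt_of_le_of_ne (hc i) (Ne.symm hi)
        exact Finset.sum_pos' (fun j _ => hc j) ⟨i, Finset.mem_univ i, this⟩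
      set t : Fin (d + 1) → ℝ := fun i => c i / a with htdef
      have ht1 : ∑ i, t i = 1 := by
        rw [htdef]; rw [← Finset.sum_div]; exact div_self ha.ne'
      refine ⟨a, ∑ i, t i • x i, ha.le, ?_, ?_⟩
      · exact (convex_convexHull ℝ _).sum_mem (fun i _ => div_nonneg (hc i) ha.le) ht1
          (fun i _ => subset_convexHull ℝ _ ⟨i, rfl⟩)
      · rw [lift_sum x ht1, Finset.smul_sum]
        exact (Finset.sum_congr rfl fun i _ => by
          rw [smul_smul, htdef]; rw [mul_div_cancel₀ _ ha.ne']).symm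


/-- The linear map sending coefficients to the combination of lifted vertices. -/
def phiMap : (Fin (d + 1) → ℝ) →ₗ[ℝ] (Fin (m + 1) → ℝ) where
  toFun := fun c => ∑ i, c i • lift (x i)
  map_add' := by intro a b; simp [add_smul, Finset.sum_add_distrib]
  map_smul' := by intro r a; simp [smul_smul, Finset.smul_sum]

lemma phi_inj (hx : AffineIndependent ℝ x) : Function.Injective (phiMap x) := by
  have h := Fintype.linearIndependent_iff.1 (linIndep x hx)
  intro a b hab
  funext i
  have h0 : phiMap x (a - b) = 0 := by rw [map_sub, hab, sub_self]
  have := h (a - b) (by simpa [phiMap, sub_smul] using h0) i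
  simpa [sub_eq_zero] using this

lemma phi_mem_span (c : Fin (d + 1) → ℝ) :
    phiMap x c ∈ Submodule.span ℝ (Set.range fun i => lift (x i)) := by
  show (∑ i, c i • lift (x i)) ∈ _
  exact Submodule.sum_mem _ fun i _ =>
    Submodule.smul_mem _ _ (Submodule.subset_span (Set.mem_range_self i))

lemma zero_mem_cone : (0 : Fin (m + 1) → ℝ) ∈ coneOf (convexHull ℝ (Set.range x)) :=
  ⟨0, x 0, le_refl 0, subset_convexHull ℝ _ ⟨0, rfl⟩, by simp⟩

lemma vlift_mem_cone (i : Fin (d + 1)) : lift (x i) ∈ coneOf (convexHull ℝ (Set.range x)) :=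
  ⟨1, x i, zero_le_one, subset_convexHull ℝ _ ⟨i, rfl⟩, (one_smul _ _).symm⟩

lemma affineSpan_cone_eq :
    affineSpan ℝ (coneOf (convexHull ℝ (Set.range x))) =
      (Submodule.span ℝ (Set.range fun i => lift (x i))).toAffineSubspace := by
  apply le_antisymm
  · rw [affineSpan_le]
    intro y hy
    obtain ⟨c, _, rfl⟩ := (mem_coneOf_iff x y).1 hy
    exact (Submodule.mem_toAffineSubspace).2 (phi_mem_span x c)
  · intro y hy
    have hy' : y ∈ Submodule.span ℝ (Set.range fun i => lift (x i)) := hy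
    show y ∈ affineSpan ℝ (coneOf (convexHull ℝ (Set.range x)))
    obtain ⟨c, rfl⟩ := (Submodule.mem_span_range_iff_exists_fun ℝ).1 hy'
    have h0 : (0 : Fin (m + 1) → ℝ) ∈ affineSpan ℝ (coneOf (convexHull ℝ (Set.range x))) :=
      subset_affineSpan _ _ (zero_mem_cone x)
    have hdir : Submodule.span ℝ (Set.range fun i => lift (x i)) ≤
        (affineSpan ℝ (coneOf (convexHull ℝ (Set.range x)))).direction := by
      rw [Submodule.span_le]
      rintro _ ⟨i, rfl⟩
      have := AffineSubspace.vsub_mem_direction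
        (subset_affineSpan ℝ _ (vlift_mem_cone x i)) h0
      simpa using this
    have hmem : (∑ i, c i • lift (x i)) ∈
        (affineSpan ℝ (coneOf (convexHull ℝ (Set.range x)))).direction :=
      hdir (phi_mem_span x c)
    simpa using AffineSubspace.vadd_mem_of_mem_direction hmem h0

lemma intrinsicInterior_cone_eq (hx : AffineIndependent ℝ x) :
    intrinsicInterior ℝ (coneOf (convexHull ℝ (Set.range x))) =
      {y | ∃ c : Fin (d + 1) → ℝ, (∀ i, 0 < c i) ∧ y = ∑ i, c i • lift (x i)} := by
  classical
  set K := coneOf (convexHull ℝ (Set.range x)) with hK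
  set V : Submodule ℝ (Fin (m + 1) → ℝ) := Submodule.span ℝ (Set.range fun i => lift (x i))
    with hV
  have hbij : Function.Bijective ((phiMap x).codRestrict V (phi_mem_span x)) := by
    constructor
    · intro a b hab
      exact phi_inj x hx (congrArg Subtype.val hab)
    · rintro ⟨y, hy⟩
      obtain ⟨c, hc⟩ := (Submodule.mem_span_range_iff_exists_fun ℝ).1 hy
      exact ⟨c, Subtype.ext hc⟩
  set e : (Fin (d + 1) → ℝ) ≃ₗ[ℝ] V := LinearEquiv.ofBijective _ hbij with he
  let homeo1 : (Fin (d + 1) → ℝ) ≃ₜ V := e.toContinuousLinearEquiv.toHomeomorph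
  have hS : ((V : Set (Fin (m + 1) → ℝ))) = (affineSpan ℝ K : Set (Fin (m + 1) → ℝ)) := by
    rw [affineSpan_cone_eq x]
    rfl
  let g : (Fin (d + 1) → ℝ) ≃ₜ (affineSpan ℝ K) := homeo1.trans (Homeomorph.setCongr hS)
  have hval : ∀ c, ((g c : Fin (m + 1) → ℝ)) = ∑ i, c i • lift (x i) := fun c => rfl
  have hpre : (fun c => ((g c : Fin (m + 1) → ℝ))) ⁻¹' K = {c | ∀ i, 0 ≤ c i} := by
    ext c
    simp only [Set.mem_preimage, hval, Set.mem_setOf_eq]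
    constructor
    · intro hc
      obtain ⟨c', hc', heq⟩ := (mem_coneOf_iff x _).1 hc
      have : c = c' := phi_inj x hx heq
      rw [this]; exact hc'
    · intro hc
      exact (mem_coneOf_iff x _).2 ⟨c, hc, rfl⟩
  have hint : interior ((fun c => ((g c : Fin (m + 1) → ℝ))) ⁻¹' K) = {c | ∀ i, 0 < c i} := by
    rw [hpre]
    have hQ : {c : Fin (d + 1) → ℝ | ∀ i, 0 ≤ c i} =
        Set.pi Set.univ (fun _ => Set.Ici (0 : ℝ)) := by
      ext c; simp [Set.mem_pi, Pi.le_def]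
    rw [hQ, interior_pi_set Set.finite_univ]
    ext c; simp [Set.mem_pi, Pi.le_def]
  have hstep : intrinsicInterior ℝ K =
      Subtype.val '' (g '' interior (g ⁻¹' (Subtype.val ⁻¹' K))) := by
    rw [Homeomorph.image_interior, Set.image_preimage_eq _ g.surjective]
    rfl
  rw [hstep, Set.image_image]
  have hcomp : (g ⁻¹' (Subtype.val ⁻¹' K)) = (fun c => ((g c : Fin (m + 1) → ℝ))) ⁻¹' K := rfl
  rw [hcomp, hint]
  ext y
  simp only [Set.mem_image, Set.mem_setOf_eq]
  constructor
  · rintro ⟨c, hc, rfl⟩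
    exact ⟨c, hc, (hval c).symm⟩
  · rintro ⟨c, hc, rfl⟩
    exact ⟨c, hc, hval c⟩


end Aux

/-- every `y ∈ M*(σ)` decomposes as `z + w` with `z ∈ M*(σ)` of degree
at most `d+1` and `w ∈ M(σ)`; in particular `rdeg y ≤ d + 1`. -/

theorem stmt0 {m d : ℕ} (σ : Set (Fin m → ℝ)) (x : Fin (d + 1) → (Fin m → ℝ))
    (hx : AffineIndependent ℝ x) (hxlat : ∀ i, isLat (x i))
    (hσ : σ = convexHull ℝ (Set.range x)) :
    ∀ y ∈ Mstar σ, ∃ z w, z ∈ Mstar σ ∧ w ∈ Msemi σ ∧ y = z + w ∧ deg z ≤ d + 1 := by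
  subst hσ
  intro y hy
  obtain ⟨hyint, hylat⟩ := hy
  rw [intrinsicInterior_cone_eq x hx] at hyint
  obtain ⟨c, hcpos, hyeq⟩ := hyint
  set n : Fin (d + 1) → ℕ := fun i => (⌈c i⌉ - 1).toNat with hn
  have hnc : ∀ i, (n i : ℝ) = (⌈c i⌉ : ℝ) - 1 := by
    intro i
    have h1 : (0 : ℤ) < ⌈c i⌉ := Int.ceil_pos.2 (hcpos i)
    have : ((⌈c i⌉ - 1).toNat : ℤ) = ⌈c i⌉ - 1 := Int.toNat_of_nonneg (by omega)
    rw [hn]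
    exact_mod_cast congrArg (fun z : ℤ => (z : ℝ)) this
  set r : Fin (d + 1) → ℝ := fun i => c i - n i with hr
  have hrpos : ∀ i, 0 < r i := by
    intro i
    have := Int.ceil_lt_add_one (c i)
    simp only [hr, hnc i]
    linarith
  have hrle : ∀ i, r i ≤ 1 := by
    intro i
    have := Int.le_ceil (c i)
    simp only [hr, hnc i]
    linarith
  set z := ∑ i, r i • lift (x i) with hz
  set w := ∑ i, (n i : ℝ) • lift (x i) with hw
  have hzw : y = z + w := by
    rw [hyeq, hz, hw, ← Finset.sum_add_distrib]
    exact Finset.sum_congr rfl fun i _ => by rw [← add_smul, hr]; ring_nf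
  have hwsemi : w ∈ Msemi (convexHull ℝ (Set.range x)) := by
    rw [hw]
    refine AddSubmonoid.sum_mem _ fun i _ => ?_
    have hgen : lift (x i) ∈
        {y | ∃ p ∈ convexHull ℝ (Set.range x), isLat p ∧ y = lift p} :=
      ⟨x i, subset_convexHull ℝ _ ⟨i, rfl⟩, hxlat i, rfl⟩
    have hmem : (n i) • lift (x i) ∈ Msemi (convexHull ℝ (Set.range x)) :=
      (Msemi (convexHull ℝ (Set.range x))).nsmul_mem (AddSubmonoid.subset_closure hgen) (n i)
    simpa [Nat.cast_smul_eq_nsmul ℝ (n i) (lift (x i))] using hmem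
  have hwlat : isLat w := by
    intro j
    choose zf hzf using fun i => isLat_lift (hxlat i) j
    refine ⟨∑ i, (n i : ℤ) * zf i, ?_⟩
    have : w j = ∑ i, (n i : ℝ) * (lift (x i) j) := by
      rw [hw]; simp [Finset.sum_apply]
    rw [this]
    push_cast
    exact Finset.sum_congr rfl fun i _ => by rw [hzf]
  have hzlat : isLat z := by
    intro j
    obtain ⟨a, ha⟩ := hylat j
    obtain ⟨b, hb⟩ := hwlat j
    refine ⟨a - b, ?_⟩
    have hj : z j = y j - w j := by rw [hzw]; simp
    rw [hj, ha, hb]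
    push_cast
    ring
  have hzint : z ∈ intrinsicInterior ℝ (coneOf (convexHull ℝ (Set.range x))) := by
    rw [intrinsicInterior_cone_eq x hx]
    exact ⟨r, hrpos, hz⟩
  refine ⟨z, w, ⟨hzint, hzlat⟩, hwsemi, hzw, ?_⟩
  have hdeg : deg z = ∑ i, r i := by
    rw [hz]
    simp [deg, Finset.sum_apply, lift_apply_last]
  rw [hdeg]
  calc ∑ i, r i ≤ ∑ _i : Fin (d + 1), (1 : ℝ) :=
        Finset.sum_le_sum fun i _ => hrle i
    _ = d + 1 := by simp
end
end

section
/- Let 𝒫 ⊂ ℝ^m be a lattice polytope of dimension d that is not an empty simplex. Then rdeg y ≤ d for all y ∈ M*(𝒫). -/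
set_option maxHeartbeats 1000000


open Set

noncomputable section

namespace Stmt6Aux


variable {m : ℕ}

lemma smul_lift_eq (c : ℝ) (x : Fin m → ℝ) : c • lift x = Fin.snoc (c • x) c := by
  funext i
  refine Fin.lastCases ?_ (fun j => ?_) i <;> simp [lift]

lemma sum_smul_lift {ι : Type*} (s : Finset ι) (w : ι → ℝ) (z : ι → Fin m → ℝ) :
    ∑ i ∈ s, w i • lift (z i) = Fin.snoc (∑ i ∈ s, w i • z i) (∑ i ∈ s, w i) := by
  funext j
  refine Fin.lastCases ?_ (fun j => ?_) j <;>
    simp [Finset.sum_apply, lift, mul_comm]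

lemma lift_injective : Function.Injective (lift (m := m)) := by
  intro x y h
  funext j
  have := congrFun h j.castSucc
  simpa [lift] using this

lemma snoc_inj {a b : Fin m → ℝ} {c e : ℝ} (h : (Fin.snoc a c : Fin (m+1) → ℝ) = Fin.snoc b e) :
    a = b ∧ c = e := by
  constructor
  · funext j; have := congrFun h j.castSucc; simpa using this
  · have := congrFun h (Fin.last m); simpa using this

lemma mem_intrinsicInterior_iff' {s : Set (Fin (m + 1) → ℝ)} {y : Fin (m + 1) → ℝ} :
    y ∈ intrinsicInterior ℝ s ↔
      y ∈ affineSpan ℝ s ∧ ∃ V ∈ nhds y, V ∩ (affineSpan ℝ s : Set (Fin (m + 1) → ℝ)) ⊆ s := by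
  constructor
  · rintro ⟨x, hx, rfl⟩
    refine ⟨x.2, ?_⟩
    rw [mem_interior_iff_mem_nhds, nhds_induced, Filter.mem_comap] at hx
    obtain ⟨V, hV, hVsub⟩ := hx
    exact ⟨V, hV, fun u ⟨huV, huA⟩ => hVsub (show (⟨u, huA⟩ : affineSpan ℝ s) ∈ _ from huV)⟩
  · rintro ⟨hyA, V, hV, hsub⟩
    refine ⟨⟨y, hyA⟩, ?_, rfl⟩
    rw [mem_interior_iff_mem_nhds, nhds_induced, Filter.mem_comap]
    exact ⟨V, hV, fun x hx => hsub ⟨hx, x.2⟩⟩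

/-- nonnegative combinations of lifts of `G`. -/
def K (G : Finset (Fin m → ℝ)) : Set (Fin (m + 1) → ℝ) :=
  {y | ∃ μ : (Fin m → ℝ) → ℝ, (∀ g ∈ G, 0 ≤ μ g) ∧ y = ∑ g ∈ G, μ g • lift g}

/-- the linear span of the lifts of `G`. -/
def W (G : Finset (Fin m → ℝ)) : Submodule ℝ (Fin (m + 1) → ℝ) :=
  Submodule.span ℝ (lift '' (↑G : Set (Fin m → ℝ)))

variable {P : Set (Fin m → ℝ)} {G : Finset (Fin m → ℝ)}

lemma lift_mem_W {g : Fin m → ℝ} (hg : g ∈ G) : lift g ∈ W G :=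
  Submodule.subset_span ⟨g, hg, rfl⟩

lemma K_subset_W : K G ⊆ (W G : Set (Fin (m + 1) → ℝ)) := by
  rintro y ⟨μ, hμ, rfl⟩
  exact Submodule.sum_mem _ fun g hg => Submodule.smul_mem _ _ (lift_mem_W hg)

lemma cone_eq_K (hGP : ↑G ⊆ P) (hPG : P ⊆ convexHull ℝ (↑G : Set (Fin m → ℝ)))
    (hPne : P.Nonempty) (hPconv : Convex ℝ P) : coneOf P = K G := by
  ext y
  constructor
  · rintro ⟨c, p, hc, hp, rfl⟩
    have hmem := hPG hp
    rw [Finset.convexHull_eq] at hmem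
    obtain ⟨w, hw0, hw1, hcm⟩ := hmem
    rw [Finset.centerMass_eq_of_sum_1 _ _ hw1] at hcm
    refine ⟨fun g => c * w g, fun g hg => mul_nonneg hc (hw0 g hg), ?_⟩
    have hA : ∑ g ∈ G, (c * w g) • g = c • p := by
      simp_rw [mul_smul]
      rw [← Finset.smul_sum]
      simp only [id] at hcm
      rw [hcm]
    have hB : ∑ g ∈ G, c * w g = c := by rw [← Finset.mul_sum, hw1, mul_one]
    rw [sum_smul_lift, smul_lift_eq, hA, hB]
  · rintro ⟨μ, hμ, rfl⟩
    set c := ∑ g ∈ G, μ g with hc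
    rcases eq_or_lt_of_le (Finset.sum_nonneg hμ) with h0 | h0
    · obtain ⟨p₀, hp₀⟩ := hPne
      refine ⟨0, p₀, le_refl _, hp₀, ?_⟩
      rw [zero_smul]
      refine Finset.sum_eq_zero fun g hg => ?_
      have : μ g = 0 := by
        have := (Finset.sum_eq_zero_iff_of_nonneg hμ).1 h0.symm g hg
        exact this
      rw [this, zero_smul]
    · set p := ∑ g ∈ G, (μ g / c) • g with hpdef
      have hpP : p ∈ P := by
        have hmem : p ∈ convexHull ℝ (↑G : Set (Fin m → ℝ)) := by
          rw [Finset.convexHull_eq]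
          refine ⟨fun g => μ g / c, fun g hg => div_nonneg (hμ g hg) h0.le, ?_, ?_⟩
          · rw [← Finset.sum_div, ← hc, div_self h0.ne']
          · rw [Finset.centerMass_eq_of_sum_1]
            · simp [hpdef]
            · rw [← Finset.sum_div, ← hc, div_self h0.ne']
        exact convexHull_min hGP hPconv hmem
      refine ⟨c, p, h0.le, hpP, ?_⟩
      have hA : ∑ g ∈ G, μ g • g = c • p := by
        rw [hpdef, Finset.smul_sum]
        refine Finset.sum_congr rfl fun g hg => ?_
        rw [smul_smul, mul_div_cancel₀ _ h0.ne']
      rw [sum_smul_lift, smul_lift_eq, hA]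

lemma affineSpan_cone_eq (hGP : ↑G ⊆ P) (hPG : P ⊆ convexHull ℝ (↑G : Set (Fin m → ℝ)))
    (hPne : P.Nonempty) (hPconv : Convex ℝ P) :
    (affineSpan ℝ (coneOf P) : Set (Fin (m + 1) → ℝ)) = (W G : Set (Fin (m + 1) → ℝ)) := by
  have hzero : (0 : Fin (m + 1) → ℝ) ∈ coneOf P := by
    obtain ⟨p₀, hp₀⟩ := hPne
    exact ⟨0, p₀, le_refl _, hp₀, (zero_smul _ _).symm⟩
  apply Subset.antisymm
  · have h1 : coneOf P ⊆ (W G : Set (Fin (m + 1) → ℝ)) := by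
      rw [cone_eq_K hGP hPG hPne hPconv]; exact K_subset_W
    have h2 : affineSpan ℝ (coneOf P) ≤ (W G).toAffineSubspace := by
      rw [affineSpan_le]; exact h1
    exact fun x hx => h2 hx
  · intro x hx
    have h0span : (0 : Fin (m + 1) → ℝ) ∈ affineSpan ℝ (coneOf P) := subset_affineSpan ℝ _ hzero
    have hdir : W G ≤ (affineSpan ℝ (coneOf P)).direction := by
      rw [W, Submodule.span_le]
      rintro _ ⟨g, hg, rfl⟩
      have hg' : lift g ∈ coneOf P := ⟨1, g, zero_le_one, hGP hg, (one_smul _ _).symm⟩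
      have := AffineSubspace.vsub_mem_direction (subset_affineSpan ℝ _ hg') h0span
      simpa using this
    have := AffineSubspace.vadd_mem_of_mem_direction (hdir hx) h0span
    simpa using this


lemma combo_mem_K {A : Finset (Fin m → ℝ)} (hAG : A ⊆ G) (c : ↥A → ℝ) (hc : ∀ i, 0 ≤ c i) :
    (∑ i : ↥A, c i • lift (i : Fin m → ℝ)) ∈ K G := by
  classical
  refine ⟨fun g => if h : g ∈ A then c ⟨g, h⟩ else 0, ?_, ?_⟩
  · intro g _
    by_cases h : g ∈ A
    · simp only [dif_pos h]; exact hc _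
    · simp [h]
  · rw [← Finset.sum_subset hAG (f := fun g =>
      (if h : g ∈ A then c ⟨g, h⟩ else 0) • lift g) (fun g _ hgA => by simp [dif_neg hgA])]
    rw [← Finset.sum_coe_sort A (fun g =>
      (if h : g ∈ A then c ⟨g, h⟩ else 0) • lift g)]
    refine Finset.sum_congr rfl fun i _ => ?_
    simp

lemma mem_intrinsic_of_pos (hGP : ↑G ⊆ P) (hPG : P ⊆ convexHull ℝ (↑G : Set (Fin m → ℝ)))
    (hPne : P.Nonempty) (hPconv : Convex ℝ P) {A : Finset (Fin m → ℝ)} (hAG : A ⊆ G)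
    (hspan : Submodule.span ℝ (lift '' (↑A : Set (Fin m → ℝ))) = W G)
    (c : ↥A → ℝ) (hc : ∀ i, 0 < c i) {y : Fin (m + 1) → ℝ}
    (hy : y = ∑ i : ↥A, c i • lift (i : Fin m → ℝ)) :
    y ∈ intrinsicInterior ℝ (coneOf P) := by
  classical
  haveI : CompleteSpace ↥(W G) := FiniteDimensional.complete ℝ _
  have hrange : Set.range (fun i : ↥A => lift (i : Fin m → ℝ))
      = lift '' (↑A : Set (Fin m → ℝ)) := by
    rw [Set.image_eq_range]; rfl
  let T₀ : (↥A → ℝ) →ₗ[ℝ] (Fin (m + 1) → ℝ) :=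
    { toFun := fun u => ∑ i : ↥A, u i • lift (i : Fin m → ℝ)
      map_add' := fun u v => by simp [add_smul, Finset.sum_add_distrib]
      map_smul' := fun r u => by simp [Finset.smul_sum, mul_smul] }
  have hT₀mem : ∀ u, T₀ u ∈ W G := fun u =>
    Submodule.sum_mem _ fun i _ => Submodule.smul_mem _ _ (lift_mem_W (hAG i.2))
  let T := LinearMap.codRestrict (W G) T₀ hT₀mem
  have hsurj : Function.Surjective T := by
    rintro ⟨x, hx⟩
    have hx' : x ∈ Submodule.span ℝ (Set.range (fun i : ↥A => lift (i : Fin m → ℝ))) := by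
      rw [hrange, hspan]; exact hx
    obtain ⟨u, hu⟩ := (Submodule.mem_span_range_iff_exists_fun ℝ).1 hx'
    exact ⟨u, Subtype.ext hu⟩
  let Tc := LinearMap.toContinuousLinearMap T
  have hopen : IsOpenMap Tc := ContinuousLinearMap.isOpenMap Tc hsurj
  have hOopen : IsOpen {u : ↥A → ℝ | ∀ i, 0 < u i} := by
    have : {u : ↥A → ℝ | ∀ i, 0 < u i} = ⋂ i, (fun u : ↥A → ℝ => u i) ⁻¹' Ioi 0 := by
      ext u; simp [mem_iInter]
    rw [this]
    exact isOpen_iInter_of_finite fun i => (continuous_apply i).isOpen_preimage _ isOpen_Ioi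
  have hyW : y ∈ W G := by
    rw [hy]
    exact Submodule.sum_mem _ fun i _ => Submodule.smul_mem _ _ (lift_mem_W (hAG i.2))
  have hyU : (⟨y, hyW⟩ : ↥(W G)) ∈ Tc '' {u : ↥A → ℝ | ∀ i, 0 < u i} :=
    ⟨c, hc, Subtype.ext (by simp [Tc, T, T₀, hy])⟩
  obtain ⟨V, hVopen, hVpre⟩ := isOpen_induced_iff.1 (hopen _ hOopen)
  rw [mem_intrinsicInterior_iff']
  have hAS := affineSpan_cone_eq hGP hPG hPne hPconv
  have hmemV : y ∈ V := by
    have : (⟨y, hyW⟩ : ↥(W G)) ∈ Subtype.val ⁻¹' V := hVpre ▸ hyU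
    exact this
  constructor
  · have : y ∈ (affineSpan ℝ (coneOf P) : Set (Fin (m + 1) → ℝ)) := by rw [hAS]; exact hyW
    exact this
  · refine ⟨V, hVopen.mem_nhds hmemV, ?_⟩
    rintro u ⟨huV, huA⟩
    rw [hAS] at huA
    have : (⟨u, huA⟩ : ↥(W G)) ∈ Subtype.val ⁻¹' V := huV
    rw [hVpre] at this
    obtain ⟨v, hv, hvu⟩ := this
    have hu_eq : u = ∑ i : ↥A, v i • lift (i : Fin m → ℝ) := by
      have := congrArg Subtype.val hvu
      simpa [Tc, T, T₀] using this.symm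
    rw [cone_eq_K hGP hPG hPne hPconv]
    rw [hu_eq]
    exact combo_mem_K hAG v fun i => (hv i).le

lemma pos_combo_of_mem_intrinsic (hGP : ↑G ⊆ P)
    (hPG : P ⊆ convexHull ℝ (↑G : Set (Fin m → ℝ)))
    (hPne : P.Nonempty) (hPconv : Convex ℝ P) {y : Fin (m + 1) → ℝ}
    (hy : y ∈ intrinsicInterior ℝ (coneOf P)) :
    ∃ μ : (Fin m → ℝ) → ℝ, (∀ g ∈ G, 0 < μ g) ∧ y = ∑ g ∈ G, μ g • lift g := by
  classical
  obtain ⟨hyA, V, hV, hsub⟩ := mem_intrinsicInterior_iff'.1 hy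
  have hAS := affineSpan_cone_eq hGP hPG hPne hPconv
  have hyW : y ∈ W G := by
    have h' : y ∈ (affineSpan ℝ (coneOf P) : Set (Fin (m + 1) → ℝ)) := hyA
    rw [hAS] at h'
    exact h'
  set u : Fin (m + 1) → ℝ := ∑ g ∈ G, lift g with hu
  have huW : u ∈ W G := Submodule.sum_mem _ fun g hg => lift_mem_W hg
  have hcont : Filter.Tendsto (fun ε : ℝ => y + ε • (y - u)) (nhds 0) (nhds y) := by
    have hco : Continuous (fun ε : ℝ => y + ε • (y - u)) :=
      continuous_const.add (continuous_id.smul continuous_const)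
    have h0 : y + (0:ℝ) • (y - u) = y := by simp
    simpa [h0] using hco.tendsto 0
  have hev : ∀ᶠ ε : ℝ in nhds 0, y + ε • (y - u) ∈ V := hcont.eventually_mem hV
  have hev' : ∀ᶠ ε : ℝ in nhdsWithin 0 (Ioi 0), y + ε • (y - u) ∈ V :=
    hev.filter_mono nhdsWithin_le_nhds
  obtain ⟨ε, hεV, hε⟩ := (hev'.and (eventually_mem_nhdsWithin)).exists
  rw [mem_Ioi] at hε
  have hyεW : y + ε • (y - u) ∈ W G :=
    Submodule.add_mem _ hyW (Submodule.smul_mem _ _ (Submodule.sub_mem _ hyW huW))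
  have hyεC : y + ε • (y - u) ∈ coneOf P := hsub ⟨hεV, by rw [hAS]; exact hyεW⟩
  rw [cone_eq_K hGP hPG hPne hPconv] at hyεC
  obtain ⟨ν, hν, hνeq⟩ := hyεC
  refine ⟨fun g => (ν g + ε) / (1 + ε), fun g hg => div_pos (by linarith [hν g hg]) (by linarith), ?_⟩
  have key : ∑ g ∈ G, ((ν g + ε) / (1 + ε)) • lift g
      = (1 + ε)⁻¹ • (∑ g ∈ G, (ν g + ε) • lift g) := by
    rw [Finset.smul_sum]
    refine Finset.sum_congr rfl fun g _ => ?_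
    rw [smul_smul, div_eq_inv_mul]
  have key2 : ∑ g ∈ G, (ν g + ε) • lift g = (y + ε • (y - u)) + ε • u := by
    simp_rw [add_smul]
    rw [Finset.sum_add_distrib, ← hνeq, ← Finset.smul_sum, ← hu]
  have key3 : y + ε • (y - u) + ε • u = (1 + ε) • y := by module
  rw [key, key2, key3, inv_smul_smul₀ (by linarith : (1:ℝ) + ε ≠ 0)]


lemma lift_linearIndependent {t : Finset (Fin m → ℝ)}
    (h : AffineIndependent ℝ (fun i : ↥t => (i : Fin m → ℝ))) :
    LinearIndependent ℝ (fun i : ↥t => lift (i : Fin m → ℝ)) := by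
  rw [Fintype.linearIndependent_iff]
  intro c hc
  rw [sum_smul_lift] at hc
  have hzero : (0 : Fin (m + 1) → ℝ) = Fin.snoc (0 : Fin m → ℝ) (0 : ℝ) := by
    funext j
    refine Fin.lastCases ?_ (fun j => ?_) j <;> simp
  rw [hzero] at hc
  obtain ⟨h1, h2⟩ := snoc_inj hc
  intro i
  exact affineIndependent_iff.1 h Finset.univ c h2 h1 i (Finset.mem_univ i)

lemma mem_intrinsic_of_pos' (hGP : ↑G ⊆ P) (hPG : P ⊆ convexHull ℝ (↑G : Set (Fin m → ℝ)))
    (hPne : P.Nonempty) (hPconv : Convex ℝ P) {A : Finset (Fin m → ℝ)} (hAG : A ⊆ G)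
    (hspan : Submodule.span ℝ (lift '' (↑A : Set (Fin m → ℝ))) = W G)
    (μ : (Fin m → ℝ) → ℝ) (hμ : ∀ g ∈ A, 0 < μ g) {y : Fin (m + 1) → ℝ}
    (hy : y = ∑ g ∈ A, μ g • lift g) :
    y ∈ intrinsicInterior ℝ (coneOf P) := by
  refine mem_intrinsic_of_pos hGP hPG hPne hPconv hAG hspan (fun i : ↥A => μ ↑i)
    (fun i => hμ _ i.2) ?_
  rw [hy, ← Finset.sum_coe_sort A (fun g => μ g • lift g)]

lemma subtype_sum_to_finset (A : Finset (Fin m → ℝ)) (c : ↥A → ℝ) :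
    ∃ μ : (Fin m → ℝ) → ℝ, (∀ i : ↥A, μ ↑i = c i) ∧
      ∑ i : ↥A, c i • lift (i : Fin m → ℝ) = ∑ g ∈ A, μ g • lift g := by
  classical
  refine ⟨fun g => if h : g ∈ A then c ⟨g, h⟩ else 0, fun i => by simp, ?_⟩
  rw [← Finset.sum_coe_sort A (fun g => (if h : g ∈ A then c ⟨g, h⟩ else 0) • lift g)]
  refine Finset.sum_congr rfl fun i _ => ?_
  simp

lemma step {d : ℕ} (hGP : ↑G ⊆ P) (hPG : P ⊆ convexHull ℝ (↑G : Set (Fin m → ℝ)))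
    (hPne : P.Nonempty) (hPconv : Convex ℝ P)
    (hWrank : Module.finrank ℝ ↥(W G) = d + 1) (hcard : d + 2 ≤ G.card)
    {y : Fin (m + 1) → ℝ} (hy : y ∈ intrinsicInterior ℝ (coneOf P))
    (hdeg : (d : ℝ) + 1 ≤ y (Fin.last m)) :
    ∃ q ∈ G, y - lift q ∈ intrinsicInterior ℝ (coneOf P) := by
  classical
  obtain ⟨lam, hlam, hyeq⟩ := pos_combo_of_mem_intrinsic hGP hPG hPne hPconv hy
  set N := y (Fin.last m) with hN
  have hdpos : (0:ℝ) ≤ d := Nat.cast_nonneg d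
  have hN1 : (1:ℝ) ≤ N := by linarith
  have hN0 : (0:ℝ) < N := by linarith
  have hyeq' : y = Fin.snoc (∑ g ∈ G, lam g • g) (∑ g ∈ G, lam g) := by
    rw [hyeq, sum_smul_lift]
  have hNsum : ∑ g ∈ G, lam g = N := by
    have h := congrFun hyeq' (Fin.last m)
    simpa using h.symm
  set x := N⁻¹ • (∑ g ∈ G, lam g • g) with hx
  have hNx : N • x = ∑ g ∈ G, lam g • g := by
    rw [hx, smul_inv_smul₀ hN0.ne']
  have hyNx : y = N • lift x := by
    rw [smul_lift_eq, hNx, hyeq', hNsum]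
  have hxconv : x ∈ convexHull ℝ (↑G : Set (Fin m → ℝ)) := by
    rw [Finset.convexHull_eq]
    have hsum1 : ∑ g ∈ G, lam g / N = 1 := by
      rw [← Finset.sum_div, hNsum, div_self hN0.ne']
    refine ⟨fun g => lam g / N, fun g hg => div_nonneg (hlam g hg).le hN0.le, hsum1, ?_⟩
    rw [Finset.centerMass_eq_of_sum_1 _ _ hsum1]
    simp only [id]
    rw [hx, Finset.smul_sum]
    refine Finset.sum_congr rfl fun g _ => ?_
    rw [smul_smul, div_eq_inv_mul]
  have hxc := hxconv
  rw [convexHull_eq_union] at hxc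
  simp only [Set.mem_iUnion] at hxc
  obtain ⟨t, htG, htind, hxt⟩ := hxc
  have htG' : t ⊆ G := Finset.coe_subset.1 htG
  rw [Finset.convexHull_eq] at hxt
  obtain ⟨w, hw0, hw1, hwx⟩ := hxt
  rw [Finset.centerMass_eq_of_sum_1 _ _ hw1] at hwx
  simp only [id] at hwx
  have htne : t.Nonempty := by
    rcases Finset.eq_empty_or_nonempty t with h | h
    · exfalso; rw [h] at hw1; simp at hw1
    · exact h
  have hlin := lift_linearIndependent htind
  have hrange : Set.range (fun i : ↥t => lift (i : Fin m → ℝ))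
      = lift '' (↑t : Set (Fin m → ℝ)) := by
    rw [Set.image_eq_range]; rfl
  have hspanle : Submodule.span ℝ (lift '' (↑t : Set (Fin m → ℝ))) ≤ W G := by
    rw [Submodule.span_le]; rintro _ ⟨g, hg, rfl⟩; exact lift_mem_W (htG' hg)
  have hcardt : t.card ≤ d + 1 := by
    have h1 : Module.finrank ℝ
        ↥(Submodule.span ℝ (lift '' (↑t : Set (Fin m → ℝ)))) = t.card := by
      rw [← hrange, finrank_span_eq_card hlin, Fintype.card_coe]
    have h2 := Submodule.finrank_mono hspanle
    rw [h1, hWrank] at h2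
    exact h2
  have hliftx : lift x = ∑ g ∈ t, w g • lift g := by
    rw [sum_smul_lift, hwx, hw1]
    rfl
  obtain ⟨q0, hq0t, hq0⟩ := Finset.exists_le_of_sum_le htne
    (f := fun _ => (t.card : ℝ)⁻¹) (g := w)
    (by
      rw [Finset.sum_const, hw1, nsmul_eq_mul,
        mul_inv_cancel₀ (by exact_mod_cast htne.card_pos.ne' : (t.card:ℝ) ≠ 0)])
  have hcardN : (t.card : ℝ) ≤ N := by
    refine le_trans ?_ hdeg
    exact_mod_cast hcardt
  have hq0N : 1 ≤ N * w q0 := by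
    have hc0 : (0:ℝ) < t.card := by exact_mod_cast htne.card_pos
    have h2 : (1:ℝ) ≤ N * (t.card:ℝ)⁻¹ := by
      rw [← div_eq_mul_inv, le_div_iff₀ hc0, one_mul]
      exact hcardN
    nlinarith
  by_cases hAcase : ∃ q ∈ t, 1 < N * w q
  · -- Case A
    obtain ⟨q, hqt, hq1⟩ := hAcase
    set a := N * w q with ha
    set b := lam q with hb'
    have hb : 0 < b := hlam q (htG' hqt)
    set ε := (a - 1) / (2 * (a + b + 1)) with hε
    have hapos : (1:ℝ) < a := hq1
    have hden : (0:ℝ) < 2 * (a + b + 1) := by nlinarith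
    have hεpos : 0 < ε := div_pos (by nlinarith) hden
    have hεlt : ε < 1 := by
      rw [div_lt_one hden]; nlinarith
    set ν : (Fin m → ℝ) → ℝ := fun g => if g ∈ t then N * w g else 0 with hν
    have hyν : y = ∑ g ∈ G, ν g • lift g := by
      rw [← Finset.sum_subset htG' (fun g hgG hgt => by simp [hν, hgt])]
      have h' : ∑ g ∈ t, ν g • lift g = N • ∑ g ∈ t, w g • lift g := by
        rw [Finset.smul_sum]
        refine Finset.sum_congr rfl fun g hg => ?_
        rw [hν]
        simp only [if_pos hg]
        rw [smul_smul]
      rw [h', ← hliftx, ← hyNx]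
    set μ : (Fin m → ℝ) → ℝ := fun g => (1 - ε) * ν g + ε * lam g with hμ
    have hyμ : y = ∑ g ∈ G, μ g • lift g := by
      have h' : ∑ g ∈ G, μ g • lift g = (1-ε) • y + ε • y := by
        simp_rw [hμ, add_smul, mul_smul]
        rw [Finset.sum_add_distrib, ← Finset.smul_sum, ← Finset.smul_sum, ← hyν, ← hyeq]
      rw [h']; module
    have hμpos : ∀ g ∈ G, 0 < μ g := by
      intro g hg
      have hν0 : 0 ≤ ν g := by
        rw [hν]
        by_cases h : g ∈ t
        · simp only [if_pos h]
          exact mul_nonneg hN0.le (hw0 g h)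
        · simp [h]
      have hl := hlam g hg
      rw [hμ]
      dsimp only
      nlinarith
    have hμq : 1 < μ q := by
      have hνq : ν q = a := by rw [hν]; simp [hqt, ha]
      have hεd : ε * (2 * (a + b + 1)) = a - 1 := by
        rw [hε]; field_simp
      rw [hμ]
      dsimp only
      rw [hνq, ← hb']
      nlinarith [hεd, hεpos, hb, hapos]
    refine ⟨q, htG' hqt, ?_⟩
    set μ' : (Fin m → ℝ) → ℝ := fun g => μ g - (if g = q then 1 else 0) with hμ'
    have hsub : y - lift q = ∑ g ∈ G, μ' g • lift g := by
      simp_rw [hμ', sub_smul]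
      rw [Finset.sum_sub_distrib, ← hyμ]
      congr 1
      simp_rw [ite_smul, one_smul, zero_smul]
      rw [Finset.sum_ite_eq' G q (fun g => lift g), if_pos (htG' hqt)]
    refine mem_intrinsic_of_pos' hGP hPG hPne hPconv (le_refl G) rfl μ' ?_ hsub
    intro g hg
    rw [hμ']
    dsimp only
    by_cases h : g = q
    · rw [if_pos h, h]; linarith [hμq]
    · rw [if_neg h]; linarith [hμpos g hg]
  · -- Case B
    push_neg at hAcase
    have hNle : N ≤ (t.card : ℝ) := by
      have hNsum' : N = ∑ g ∈ t, N * w g := by rw [← Finset.mul_sum, hw1, mul_one]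
      have hle : ∑ g ∈ t, N * w g ≤ ∑ _g ∈ t, (1:ℝ) :=
        Finset.sum_le_sum fun g hg => hAcase g hg
      rw [Finset.sum_const, nsmul_eq_mul, mul_one] at hle
      linarith [hNsum' ▸ hle]
    have hcard_eq : (t.card : ℝ) = N := le_antisymm hcardN hNle
    have htcard : t.card = d + 1 := by
      have h1 : ((d:ℝ) + 1) ≤ (t.card : ℝ) := by rw [hcard_eq]; exact hdeg
      have h2 : d + 1 ≤ t.card := by exact_mod_cast h1
      omega
    have hall1 : ∀ g ∈ t, N * w g = 1 := by
      by_contra hcon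
      push_neg at hcon
      obtain ⟨g₀, hg₀t, hg₀⟩ := hcon
      have hlt : ∑ g ∈ t, N * w g < ∑ _g ∈ t, (1:ℝ) :=
        Finset.sum_lt_sum (fun i hi => hAcase i hi)
          ⟨g₀, hg₀t, lt_of_le_of_ne (hAcase g₀ hg₀t) hg₀⟩
      rw [← Finset.mul_sum, hw1, mul_one, Finset.sum_const, nsmul_eq_mul, mul_one] at hlt
      linarith [hcard_eq]
    have hyt : y = ∑ g ∈ t, lift g := by
      rw [hyNx, hliftx, Finset.smul_sum]
      refine Finset.sum_congr rfl fun g hg => ?_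
      rw [smul_smul, hall1 g hg, one_smul]
    have hspan_t : Submodule.span ℝ (lift '' (↑t : Set (Fin m → ℝ))) = W G := by
      apply Submodule.eq_of_le_of_finrank_eq hspanle
      rw [← hrange, finrank_span_eq_card hlin, Fintype.card_coe, htcard, hWrank]
    have hrex : ∃ r ∈ G, r ∉ t := by
      by_contra h
      push_neg at h
      have : G.card ≤ t.card := Finset.card_le_card fun g hg => h g hg
      omega
    obtain ⟨r, hrG, hrt⟩ := hrex
    have hliftr : lift r ∈ Submodule.span ℝ (Set.range (fun i : ↥t => lift (i : Fin m → ℝ))) := by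
      rw [hrange, hspan_t]; exact lift_mem_W hrG
    obtain ⟨α, hα⟩ := (Submodule.mem_span_range_iff_exists_fun ℝ).1 hliftr
    obtain ⟨αE, hαE_eq, hαE_sum⟩ := subtype_sum_to_finset t α
    rw [hαE_sum] at hα
    -- hα : ∑ g ∈ t, αE g • lift g = lift r
    have hαsum : ∑ g ∈ t, αE g = 1 := by
      have h := congrFun hα (Fin.last m)
      rw [sum_smul_lift] at h
      simpa [lift] using h
    by_cases hB1 : ∀ g ∈ t, αE g < 1
    · refine ⟨r, hrG, ?_⟩
      refine mem_intrinsic_of_pos' hGP hPG hPne hPconv htG' hspan_t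
        (fun g => 1 - αE g) (fun g hg => by linarith [hB1 g hg]) ?_
      simp_rw [sub_smul, one_smul]
      rw [Finset.sum_sub_distrib, ← hyt, hα]
    · push_neg at hB1
      obtain ⟨g1, hg1t, hg1⟩ := hB1
      have hg2ex : ∃ g2 ∈ t, αE g2 < 0 := by
        by_contra h
        push_neg at h
        have hle : αE g1 ≤ 1 := by
          have h' := Finset.single_le_sum (f := αE) (fun i hi => h i hi) hg1t
          rw [hαsum] at h'
          exact h'
        have hα1 : αE g1 = 1 := le_antisymm hle hg1
        have hrest : ∀ g ∈ t, g ≠ g1 → αE g = 0 := by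
          intro g hg hgne
          have hsum0 : ∑ i ∈ t.erase g1, αE i = 0 := by
            have h'' := Finset.add_sum_erase t αE hg1t
            rw [hαsum, hα1] at h''
            linarith
          exact (Finset.sum_eq_zero_iff_of_nonneg
            (fun j hj => h j (Finset.mem_of_mem_erase hj))).1 hsum0 g
            (Finset.mem_erase.2 ⟨hgne, hg⟩)
        have hlift_eq : lift r = lift g1 := by
          rw [← hα, Finset.sum_eq_single g1
            (fun j hj hjne => by rw [hrest j hj hjne, zero_smul])
            (fun hnot => absurd hg1t hnot), hα1, one_smul]
        exact hrt (by rw [lift_injective hlift_eq]; exact hg1t)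
      obtain ⟨g2, hg2t, hg2⟩ := hg2ex
      set S := ∑ g ∈ t, |αE g| with hS
      have hSnn : 0 ≤ S := Finset.sum_nonneg fun g _ => abs_nonneg _
      have hSpos : (0:ℝ) < 1 + S := by linarith
      set δ := (1 + S)⁻¹ with hδ
      have hδpos : 0 < δ := inv_pos.2 hSpos
      have hδS : δ * (1 + S) = 1 := inv_mul_cancel₀ hSpos.ne'
      have hδα : ∀ g ∈ t, δ * αE g < 1 := by
        intro g hg
        have h1 : αE g ≤ |αE g| := le_abs_self _
        have h2 : |αE g| ≤ S := Finset.single_le_sum (fun j _ => abs_nonneg (αE j)) hg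
        nlinarith
      refine ⟨g2, htG' hg2t, ?_⟩
      have hrA : (insert r t : Finset (Fin m → ℝ)) ⊆ G := Finset.insert_subset hrG htG'
      have hspanA : Submodule.span ℝ
          (lift '' (↑(insert r t) : Set (Fin m → ℝ))) = W G := by
        apply le_antisymm
        · rw [Submodule.span_le]
          rintro _ ⟨g, hg, rfl⟩
          refine lift_mem_W (hrA ?_)
          exact_mod_cast hg
        · rw [← hspan_t]
          refine Submodule.span_mono (Set.image_mono ?_)
          rw [Finset.coe_insert]
          exact Set.subset_insert _ _
      set μ : (Fin m → ℝ) → ℝ := fun g =>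
        if g = r then δ else (1 - δ * αE g) - (if g = g2 then 1 else 0) with hμ
      have hμpos : ∀ g ∈ insert r t, 0 < μ g := by
        intro g hg
        rw [hμ]
        dsimp only
        by_cases hgr : g = r
        · rw [if_pos hgr]; exact hδpos
        · rw [if_neg hgr]
          have hgt : g ∈ t := by
            rcases Finset.mem_insert.1 hg with h | h
            · exact absurd h hgr
            · exact h
          by_cases hgg2 : g = g2
          · rw [if_pos hgg2, hgg2]
            have := mul_neg_of_pos_of_neg hδpos hg2
            linarith
          · rw [if_neg hgg2]
            linarith [hδα g hgt]
      have hsum_eq : y - lift g2 = ∑ g ∈ insert r t, μ g • lift g := by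
        rw [Finset.sum_insert hrt]
        have hμr : μ r = δ := by rw [hμ]; simp
        have hterm : ∀ g ∈ t, μ g • lift g
            = (1 - δ * αE g) • lift g - (if g = g2 then (1:ℝ) else 0) • lift g := by
          intro g hg
          have hgr : g ≠ r := fun h => hrt (h ▸ hg)
          rw [hμ]
          dsimp only
          rw [if_neg hgr, sub_smul]
        rw [Finset.sum_congr rfl hterm, Finset.sum_sub_distrib]
        have h3 : ∑ g ∈ t, (if g = g2 then (1:ℝ) else 0) • lift g = lift g2 := by
          simp_rw [ite_smul, one_smul, zero_smul]
          rw [Finset.sum_ite_eq' t g2 (fun g => lift g), if_pos hg2t]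
        have h4 : ∑ g ∈ t, (1 - δ * αE g) • lift g = y - δ • lift r := by
          simp_rw [sub_smul, one_smul]
          rw [Finset.sum_sub_distrib, ← hyt]
          congr 1
          simp_rw [mul_smul]
          rw [← Finset.smul_sum, hα]
        rw [h3, h4, hμr]
        module
      exact mem_intrinsic_of_pos' hGP hPG hPne hPconv hrA hspanA μ hμpos hsum_eq


lemma isLat_sub {n : ℕ} {x y : Fin n → ℝ} (hx : isLat x) (hy : isLat y) : isLat (x - y) := by
  intro i
  obtain ⟨a, ha⟩ := hx i
  obtain ⟨b, hb⟩ := hy i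
  exact ⟨a - b, by push_cast; rw [Pi.sub_apply, ha, hb]⟩

lemma isLat_lift {x : Fin m → ℝ} (h : isLat x) : isLat (lift x) := by
  intro i
  refine Fin.lastCases ?_ (fun j => ?_) i
  · exact ⟨1, by simp [lift]⟩
  · obtain ⟨a, ha⟩ := h j
    exact ⟨a, by simpa [lift] using ha⟩

lemma main_rec {d : ℕ} (hGP : ↑G ⊆ P) (hPG : P ⊆ convexHull ℝ (↑G : Set (Fin m → ℝ)))
    (hPne : P.Nonempty) (hPconv : Convex ℝ P) (hGlat : ∀ g ∈ G, isLat g)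
    (hWrank : Module.finrank ℝ ↥(W G) = d + 1) (hcard : d + 2 ≤ G.card) :
    ∀ n : ℕ, ∀ y ∈ Mstar P, deg y ≤ (n : ℝ) →
      ∃ z w, z ∈ Mstar P ∧ w ∈ Msemi P ∧ y = z + w ∧ deg z ≤ (d : ℝ) := by
  intro n
  induction n with
  | zero =>
      intro y hy hdy
      by_cases hc : deg y ≤ (d : ℝ)
      · exact ⟨y, 0, hy, (Msemi P).zero_mem, (add_zero y).symm, hc⟩
      · exfalso
        push_neg at hc
        have hd0 : (0:ℝ) ≤ d := Nat.cast_nonneg d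
        have h1 : (0:ℝ) < deg y := lt_of_le_of_lt hd0 hc
        have h2 : deg y ≤ (0:ℝ) := by exact_mod_cast hdy
        linarith
  | succ n ih =>
      intro y hy hdy
      by_cases hc : deg y ≤ (d : ℝ)
      · exact ⟨y, 0, hy, (Msemi P).zero_mem, (add_zero y).symm, hc⟩
      · push_neg at hc
        obtain ⟨k, hk⟩ := hy.2 (Fin.last m)
        have hk' : deg y = (k : ℝ) := hk
        have hdk : (d : ℤ) < k := by
          have : (d : ℝ) < (k : ℝ) := hk' ▸ hc
          exact_mod_cast this
        have hd1 : (d : ℝ) + 1 ≤ y (Fin.last m) := by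
          have : ((d : ℤ) + 1 : ℝ) ≤ (k : ℝ) := by exact_mod_cast (by omega : (d:ℤ) + 1 ≤ k)
          have h2 : (d : ℝ) + 1 ≤ (k : ℝ) := by push_cast at this; linarith
          rw [← hk'] at h2
          exact h2
        obtain ⟨q, hqG, hqint⟩ := step hGP hPG hPne hPconv hWrank hcard hy.1 hd1
        have hylat : isLat (y - lift q) := isLat_sub hy.2 (isLat_lift (hGlat q hqG))
        have hMq : y - lift q ∈ Mstar P := ⟨hqint, hylat⟩
        have hdq : deg (y - lift q) = deg y - 1 := by
          simp [deg, lift, Pi.sub_apply]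
        have hdq' : deg (y - lift q) ≤ (n : ℝ) := by
          rw [hdq]
          push_cast at hdy ⊢
          linarith
        obtain ⟨z, wv, hz, hw, heq, hdz⟩ := ih (y - lift q) hMq hdq'
        refine ⟨z, wv + lift q, hz, (Msemi P).add_mem hw
          (AddSubmonoid.subset_closure ⟨q, hGP hqG, hGlat q hqG, rfl⟩), ?_, hdz⟩
        have h3 : y - lift q = z + wv := heq
        have : y = (y - lift q) + lift q := by abel
        rw [this, h3, add_assoc]

end Stmt6Aux

/-- a lattice polytope of dimension `d` that is not an empty simplex
satisfies `rdeg y ≤ d` for all `y ∈ M*(P)`. -/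
theorem stmt6 {m d : ℕ} (P : Set (Fin m → ℝ)) (V : Set (Fin m → ℝ))
    (hV : V.Finite) (hVlat : ∀ p ∈ V, isLat p) (hP : P = convexHull ℝ V)
    (hdim : Module.finrank ℝ (vectorSpan ℝ P) = d)
    (hnes : ¬ ∃ x : Fin (d + 1) → (Fin m → ℝ), AffineIndependent ℝ x ∧
      P = convexHull ℝ (Set.range x) ∧ ∀ p ∈ P, isLat p → p ∈ Set.range x) :
    ∀ y ∈ Mstar P, ∃ z w, z ∈ Mstar P ∧ w ∈ Msemi P ∧ y = z + w ∧ deg z ≤ d := by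
  classical
  intro y hy
  have hPconv : Convex ℝ P := hP ▸ convex_convexHull ℝ V
  rcases V.eq_empty_or_nonempty with hVempty | ⟨v₀, hv₀⟩
  · exfalso
    have h1 : y ∈ coneOf P := intrinsicInterior_subset hy.1
    obtain ⟨c, p, _, hp, _⟩ := h1
    rw [hP, hVempty, convexHull_empty] at hp
    exact hp
  · have hv₀P : v₀ ∈ P := hP ▸ subset_convexHull ℝ V hv₀
    have hPne : P.Nonempty := ⟨v₀, hv₀P⟩
    obtain ⟨t₀, ht₀V, ht₀span, ht₀ind⟩ := exists_affineIndependent ℝ (Fin m → ℝ) V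
    have ht₀fin : t₀.Finite := hV.subset ht₀V
    set tF := ht₀fin.toFinset with htFdef
    have htFcoe : (↑tF : Set (Fin m → ℝ)) = t₀ := ht₀fin.coe_toFinset
    have htFind : AffineIndependent ℝ (fun i : ↥tF => (i : Fin m → ℝ)) := by
      have h := ht₀ind.comp_embedding
        (Equiv.subtypeEquivRight (fun x => ht₀fin.mem_toFinset)).toEmbedding
      have hfe : (Subtype.val ∘
            ⇑(Equiv.subtypeEquivRight (fun x => ht₀fin.mem_toFinset)).toEmbedding)
          = (fun i : ↥tF => (i : Fin m → ℝ)) := by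
        funext i
        rfl
      rw [hfe] at h
      exact h
    have hrangeF : Set.range (fun i : ↥tF => (i : Fin m → ℝ)) = (↑tF : Set (Fin m → ℝ)) := by
      rw [Subtype.range_coe_subtype]
      ext u; simp
    have hvs : vectorSpan ℝ (Set.range (fun i : ↥tF => (i : Fin m → ℝ))) = vectorSpan ℝ P := by
      rw [hrangeF, htFcoe]
      have h1 : affineSpan ℝ t₀ = affineSpan ℝ P := by
        rw [ht₀span, hP, affineSpan_convexHull]
      calc vectorSpan ℝ t₀ = (affineSpan ℝ t₀).direction := (direction_affineSpan ℝ t₀).symm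
        _ = (affineSpan ℝ P).direction := by rw [h1]
        _ = vectorSpan ℝ P := direction_affineSpan ℝ P
    have htFne : tF.Nonempty := by
      rcases Finset.eq_empty_or_nonempty tF with h | h
      · exfalso
        have h2 : t₀ = ∅ := by rw [← htFcoe, h]; simp
        have h3 : v₀ ∈ affineSpan ℝ V := subset_affineSpan ℝ V hv₀
        rw [← ht₀span, h2] at h3
        have h4 : v₀ ∈ (affineSpan ℝ (∅ : Set (Fin m → ℝ)) : Set (Fin m → ℝ)) := h3
        rw [AffineSubspace.span_empty, AffineSubspace.bot_coe] at h4
        exact h4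
      · exact h
    have htFcard : tF.card = d + 1 := by
      have hn1 : 1 ≤ tF.card := htFne.card_pos
      have hfr := htFind.finrank_vectorSpan (n := tF.card - 1)
        (by rw [Fintype.card_coe]; omega)
      rw [hvs, hdim] at hfr
      omega
    by_cases hex : ∃ r, r ∈ P ∧ isLat r ∧ r ∉ t₀
    · obtain ⟨r, hrP, hrlat, hrt⟩ := hex
      set G : Finset (Fin m → ℝ) := insert r hV.toFinset with hG
      have hVG : V ⊆ (↑G : Set (Fin m → ℝ)) := by
        intro v hv
        rw [hG]
        simp [hV.mem_toFinset, hv]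
      have hGP : (↑G : Set (Fin m → ℝ)) ⊆ P := by
        intro g hg
        rcases Finset.mem_insert.1 (by exact_mod_cast hg) with h | h
        · exact h ▸ hrP
        · exact hP ▸ subset_convexHull ℝ V (hV.mem_toFinset.1 h)
      have hPG : P ⊆ convexHull ℝ (↑G : Set (Fin m → ℝ)) := by
        rw [hP]; exact convexHull_mono hVG
      have hGlat : ∀ g ∈ G, isLat g := by
        intro g hg
        rcases Finset.mem_insert.1 hg with h | h
        · exact h ▸ hrlat
        · exact hVlat g (hV.mem_toFinset.1 h)
      have htFG : tF ⊆ G := by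
        intro g hg
        have : g ∈ t₀ := by rw [← htFcoe]; exact_mod_cast hg
        exact Finset.mem_coe.1 (hVG (ht₀V this))
      have hrG : r ∈ G := Finset.mem_insert_self r _
      have hrtF : r ∉ tF := fun h => hrt (by rw [← htFcoe]; exact_mod_cast h)
      have hcard : d + 2 ≤ G.card := by
        have hsub : insert r tF ⊆ G := Finset.insert_subset hrG htFG
        have h1 : (insert r tF).card = d + 2 := by
          rw [Finset.card_insert_of_notMem hrtF, htFcard]
        calc d + 2 = (insert r tF).card := h1.symm
          _ ≤ G.card := Finset.card_le_card hsub
      have hrangeL : Set.range (fun i : ↥tF => lift (i : Fin m → ℝ))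
          = lift '' (↑tF : Set (Fin m → ℝ)) := by
        rw [Set.image_eq_range]; rfl
      have hsp_le : Submodule.span ℝ (lift '' (↑tF : Set (Fin m → ℝ))) ≤ Stmt6Aux.W G := by
        rw [Submodule.span_le]
        rintro _ ⟨g, hg, rfl⟩
        exact Stmt6Aux.lift_mem_W (htFG (by exact_mod_cast hg))
      have hW_le : Stmt6Aux.W G ≤ Submodule.span ℝ (lift '' (↑tF : Set (Fin m → ℝ))) := by
        rw [Stmt6Aux.W, Submodule.span_le]
        rintro _ ⟨g, hg, rfl⟩
        have hgP : g ∈ P := hGP hg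
        have hgspan : g ∈ affineSpan ℝ (Set.range (fun i : ↥tF => (i : Fin m → ℝ))) := by
          rw [hrangeF, htFcoe, ht₀span]
          have h2 : g ∈ affineSpan ℝ P := subset_affineSpan ℝ P hgP
          rw [hP, affineSpan_convexHull] at h2
          exact h2
        obtain ⟨c, hc1, hcomb⟩ := eq_affineCombination_of_mem_affineSpan_of_fintype hgspan
        rw [Finset.affineCombination_eq_linear_combination _ _ _ hc1] at hcomb
        have hliftg : lift g = ∑ i : ↥tF, c i • lift (i : Fin m → ℝ) := by
          rw [Stmt6Aux.sum_smul_lift, ← hcomb, hc1]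
          rfl
        rw [hliftg]
        exact Submodule.sum_mem _ fun i _ =>
          Submodule.smul_mem _ _ (Submodule.subset_span ⟨↑i, by exact_mod_cast i.2, rfl⟩)
      have hWrank : Module.finrank ℝ ↥(Stmt6Aux.W G) = d + 1 := by
        have heq : Stmt6Aux.W G = Submodule.span ℝ (lift '' (↑tF : Set (Fin m → ℝ))) :=
          le_antisymm hW_le hsp_le
        rw [heq, ← hrangeL, finrank_span_eq_card (Stmt6Aux.lift_linearIndependent htFind),
          Fintype.card_coe, htFcard]
      obtain ⟨k, hk⟩ := hy.2 (Fin.last m)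
      have hdeg0 : 0 ≤ deg y := by
        obtain ⟨c, p, hc, _, hyeq⟩ := intrinsicInterior_subset hy.1
        have : deg y = c := by rw [hyeq]; simp [deg, lift]
        rw [this]; exact hc
      have hk0 : 0 ≤ k := by
        have h' : (0:ℝ) ≤ (k : ℝ) := by rw [← hk]; exact hdeg0
        exact_mod_cast h'
      refine Stmt6Aux.main_rec hGP hPG hPne hPconv hGlat hWrank hcard k.toNat y hy ?_
      have : deg y = (k : ℝ) := hk
      rw [this]
      exact_mod_cast le_of_eq (by omega : k = k.toNat)
    · exfalso
      push_neg at hex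
      apply hnes
      have hcardty : Fintype.card ↥tF = d + 1 := by rw [Fintype.card_coe, htFcard]
      set e := Fintype.equivFinOfCardEq hcardty with he
      refine ⟨fun i => ((e.symm i : ↥tF) : Fin m → ℝ),
        htFind.comp_embedding e.symm.toEmbedding, ?_, ?_⟩
      · have hrange : Set.range (fun i => ((e.symm i : ↥tF) : Fin m → ℝ)) = t₀ := by
          have h1 : Set.range ((fun i : ↥tF => (i : Fin m → ℝ)) ∘ e.symm)
              = Set.range (fun i : ↥tF => (i : Fin m → ℝ)) :=
            e.symm.surjective.range_comp _
          rw [show (fun i => ((e.symm i : ↥tF) : Fin m → ℝ))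
            = (fun i : ↥tF => (i : Fin m → ℝ)) ∘ e.symm from rfl, h1, hrangeF, htFcoe]
        rw [hrange]
        have hVt₀ : V ⊆ t₀ := fun v hv => hex v (hP ▸ subset_convexHull ℝ V hv) (hVlat v hv)
        apply Set.Subset.antisymm
        · rw [hP]; exact convexHull_mono hVt₀
        · calc convexHull ℝ t₀ ⊆ convexHull ℝ V := convexHull_mono ht₀V
            _ = P := hP.symm
      · intro p hp hlat
        have hrange : Set.range (fun i => ((e.symm i : ↥tF) : Fin m → ℝ)) = t₀ := by
          have h1 : Set.range ((fun i : ↥tF => (i : Fin m → ℝ)) ∘ e.symm)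
              = Set.range (fun i : ↥tF => (i : Fin m → ℝ)) :=
            e.symm.surjective.range_comp _
          rw [show (fun i => ((e.symm i : ↥tF) : Fin m → ℝ))
            = (fun i : ↥tF => (i : Fin m → ℝ)) ∘ e.symm from rfl, h1, hrangeF, htFcoe]
        rw [hrange]
        exact hex p hp hlat
end
end
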